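/- Let H be the n × n symmetric matrix with H_{ij} = (A + 2λᵢδ_{ij})/((1+λᵢ²)(1+λⱼ²)). Then det H = (A·2^{n−1}σ_{n−1}(λ) + 2ⁿσₙ(λ))/∏ᵢ(1+λᵢ²)². -/

import Mathlib

open Real Finset

lemma key_det (n : ℕ) (A : ℝ) (d : Fin n → ℝ) :
    (Matrix.of fun i j : Fin n => A + if i = j then d i else 0).det
      = A * ∑ j, ∏ i ∈ Finset.univ.erase j, d i + ∏ i, d i := by
  classical
  set a : Fin n → (Fin n → ℝ) := fun _ _ => A with ha
  set b : Fin n → (Fin n → ℝ) := fun i => Pi.single i (d i) with hb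
  have hob : Matrix.of b = Matrix.diagonal d := by
    ext i j
    by_cases h : i = j <;> simp [hb, Pi.single_apply, Matrix.diagonal_apply, h, eq_comm]
  have hM : (Matrix.of fun i j : Fin n => A + if i = j then d i else 0) = Matrix.of (a + b) := by
    ext i j
    by_cases h : i = j <;> simp [ha, hb, Pi.single_apply, h, eq_comm]
  rw [hM]
  have hdet : ∀ v : Fin n → (Fin n → ℝ), (Matrix.of v).det = Matrix.detRowAlternating v :=
    fun v => rfl
  have hexp : Matrix.detRowAlternating (a + b)
      = ∑ s : Finset (Fin n), Matrix.detRowAlternating (s.piecewise a b) :=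
    Matrix.detRowAlternating.toMultilinearMap.map_add_univ a b
  rw [hdet, hexp]
  have hzero : ∀ s : Finset (Fin n), 2 ≤ s.card →
      Matrix.detRowAlternating (s.piecewise a b) = 0 := by
    intro s hs
    obtain ⟨i, hi, j, hj, hij⟩ := Finset.one_lt_card.mp hs
    refine Matrix.detRowAlternating.map_eq_zero_of_eq _ ?_ hij
    rw [Finset.piecewise_eq_of_mem _ _ _ hi, Finset.piecewise_eq_of_mem _ _ _ hj]
  have hsingle : ∀ j : Fin n, Matrix.detRowAlternating (({j} : Finset (Fin n)).piecewise a b)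
      = A * ∏ i ∈ Finset.univ.erase j, d i := by
    intro j
    rw [Finset.piecewise_singleton]
    have haj : a j = ∑ k, Pi.single k A := by
      rw [Finset.univ_sum_single (fun _ => A)]
    have hexp2 : Matrix.detRowAlternating (Function.update b j (∑ k, Pi.single k A))
        = ∑ k, Matrix.detRowAlternating (Function.update b j (Pi.single k A)) :=
      Matrix.detRowAlternating.toMultilinearMap.map_update_sum Finset.univ j _ b
    rw [haj, hexp2]
    have hterm : ∀ k : Fin n, Matrix.detRowAlternating (Function.update b j (Pi.single k A))
        = if k = j then A * ∏ i ∈ Finset.univ.erase j, d i else 0 := by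
      intro k
      have : Function.update b j (Pi.single k A)
          = (Matrix.of b).updateRow j (Pi.single k A) := rfl
      rw [← hdet, this, hob]
      by_cases hk : k = j
      · subst hk
        rw [Matrix.diagonal_updateRow_single]
        rw [if_pos rfl]
        show (Matrix.diagonal (Function.update d k A)).det
            = A * ∏ i ∈ Finset.univ.erase k, d i
        rw [Matrix.det_diagonal, Finset.prod_update_of_mem (Finset.mem_univ k),
          Finset.sdiff_singleton_eq_erase]
      · rw [if_neg hk]
        apply Matrix.det_eq_zero_of_column_eq_zero j
        intro i
        change ((Matrix.diagonal d).updateRow j (Pi.single k A)) i j = 0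
        by_cases hi : i = j
        · subst hi
          simp [Pi.single_apply, Ne.symm hk]
        · simp [Matrix.updateRow_ne hi, Matrix.diagonal_apply_ne _ hi]
    rw [Finset.sum_congr rfl (fun k _ => hterm k), Finset.sum_ite_eq' Finset.univ j
      (fun _ => A * ∏ i ∈ Finset.univ.erase j, d i)]
    simp
  -- restrict sum to sets of card ≤ 1
  rw [← Finset.sum_filter_of_ne (p := fun s : Finset (Fin n) => s.card ≤ 1)
    (by
      intro s _ h
      by_contra hc
      exact h (hzero s (by omega)))]
  have hset : Finset.univ.filter (fun s : Finset (Fin n) => s.card ≤ 1)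
      = insert ∅ (Finset.univ.image fun j : Fin n => ({j} : Finset (Fin n))) := by
    ext s
    simp only [Finset.mem_filter, Finset.mem_univ, true_and, Finset.mem_insert, Finset.mem_image]
    constructor
    · intro h
      rcases Nat.le_one_iff_eq_zero_or_eq_one.mp h with h0 | h1
      · exact Or.inl (Finset.card_eq_zero.mp h0)
      · obtain ⟨x, rfl⟩ := Finset.card_eq_one.mp h1
        exact Or.inr ⟨x, rfl⟩
    · rintro (rfl | ⟨a, rfl⟩) <;> simp
  rw [hset, Finset.sum_insert (by simp),
    Finset.sum_image (fun a _ b _ h => Finset.singleton_injective h)]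
  rw [Finset.piecewise_empty, ← hdet, hob, Matrix.det_diagonal,
    Finset.sum_congr rfl (fun j _ => hsingle j), ← Finset.mul_sum]
  ring

theorem stmt9 (n : ℕ) (hn : 1 ≤ n) (A : ℝ) (lam : Fin n → ℝ) :
    (Matrix.of fun i j : Fin n =>
        (A + if i = j then 2 * lam i else 0) / ((1 + lam i ^ 2) * (1 + lam j ^ 2))).det
      = (A * 2 ^ (n - 1) *
            (∑ s ∈ Finset.univ.powersetCard (n - 1), ∏ i ∈ s, lam i)
          + 2 ^ n * (∑ s ∈ Finset.univ.powersetCard n, ∏ i ∈ s, lam i))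
        / ∏ i, (1 + lam i ^ 2) ^ 2 := by
  classical
  set c : Fin n → ℝ := fun i => (1 + lam i ^ 2)⁻¹ with hc
  have hne : ∀ i, (1 + lam i ^ 2) ≠ 0 := fun i => by positivity
  have hfac : (Matrix.of fun i j : Fin n =>
        (A + if i = j then 2 * lam i else 0) / ((1 + lam i ^ 2) * (1 + lam j ^ 2)))
      = Matrix.diagonal c *
          (Matrix.of fun i j : Fin n => A + if i = j then 2 * lam i else 0) *
          Matrix.diagonal c := by
    ext i j
    rw [Matrix.mul_diagonal, Matrix.diagonal_mul]
    simp only [Matrix.of_apply, hc]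
    field_simp
  rw [hfac, Matrix.det_mul, Matrix.det_mul, Matrix.det_diagonal,
    key_det n A (fun i => 2 * lam i)]
  have hP : (0:ℝ) < ∏ i, (1 + lam i ^ 2) :=
    Finset.prod_pos (fun i _ => by positivity)
  have hprodc : ∏ i, c i = (∏ i, (1 + lam i ^ 2))⁻¹ := by
    rw [hc, ← Finset.prod_inv_distrib]
  have hSn : (∑ s ∈ Finset.univ.powersetCard n, ∏ i ∈ s, lam i) = ∏ i, lam i := by
    have h := Finset.powersetCard_self (Finset.univ : Finset (Fin n))
    rw [Finset.card_univ, Fintype.card_fin] at h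
    rw [h, Finset.sum_singleton]
  have hSn1 : (∑ s ∈ Finset.univ.powersetCard (n - 1), ∏ i ∈ s, lam i)
      = ∑ j, ∏ i ∈ Finset.univ.erase j, lam i := by
    have himg : Finset.univ.powersetCard (n - 1)
        = Finset.univ.image (fun j : Fin n => Finset.univ.erase j) := by
      ext s
      simp only [Finset.mem_powersetCard_univ, Finset.mem_image, Finset.mem_univ, true_and]
      constructor
      · intro h
        have hcompl : sᶜ.card = 1 := by
          have h1 := Finset.card_compl s
          have h2 : Fintype.card (Fin n) = n := Fintype.card_fin n
          omega
        obtain ⟨j, hj⟩ := Finset.card_eq_one.mp hcompl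
        exact ⟨j, by rw [← Finset.compl_singleton, ← hj, compl_compl]⟩
      · rintro ⟨j, rfl⟩
        rw [Finset.card_erase_of_mem (Finset.mem_univ j)]
        simp
    rw [himg, Finset.sum_image]
    intro a _ b _ h
    by_contra hab
    have hmem : a ∈ Finset.univ.erase b := Finset.mem_erase.mpr ⟨hab, Finset.mem_univ a⟩
    have h' : Finset.univ.erase a = Finset.univ.erase b := h; rw [← h'] at hmem
    exact Finset.notMem_erase a _ hmem
  have e1 : ∀ j : Fin n, (∏ i ∈ Finset.univ.erase j, (2 * lam i))
      = 2 ^ (n - 1) * ∏ i ∈ Finset.univ.erase j, lam i := by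
    intro j
    rw [Finset.prod_mul_distrib, Finset.prod_const,
      Finset.card_erase_of_mem (Finset.mem_univ j)]
    simp
  have e2 : (∏ i, (2 * lam i)) = 2 ^ n * ∏ i, lam i := by
    rw [Finset.prod_mul_distrib, Finset.prod_const]
    simp
  rw [hSn, hSn1, Finset.sum_congr rfl (fun j _ => e1 j), e2, ← Finset.mul_sum]
  have hsq : (∏ i, (1 + lam i ^ 2) ^ 2) = (∏ i, (1 + lam i ^ 2)) ^ 2 := by
    rw [Finset.prod_pow]
  rw [hprodc, hsq]
  field_simp
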